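/- arXiv:quant-ph/0607092 — 5 statements merged into one kernel-verified Lean document; each statement's English description precedes it below -/
import Mathlib

section
/- Let m ≥ 1 be an integer. For every a ∈ Fin m and every n ≥ 1, (P_a · C_G)^n = p_n · |a⟩⟨s| + q_n · P_a, where p_n = (2/√m)·(2/m − 1)^(n−1) and q_n = −(2/m − 1)^(n−1). -/
noncomputable section

open scoped BigOperators

/-- The complex Euclidean space `ℂ^m`. -/
abbrev H (m : ℕ) := EuclideanSpace ℂ (Fin m)

/-- The computational orthonormal basis vector `|a⟩`. -/
def ket {m : ℕ} (a : Fin m) : H m := EuclideanSpace.single a 1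

/-- The uniform superposition `|s⟩ = (1/√m) Σ_a |a⟩`. -/
def ketS (m : ℕ) : H m := ((Real.sqrt m : ℂ))⁻¹ • ∑ a : Fin m, ket a

/-- The outer product `|x⟩⟨y|`, i.e. `v ↦ ⟪y, v⟫ • x`. -/
def outer {m : ℕ} (x y : H m) : H m →L[ℂ] H m := (innerSL ℂ y).smulRight x

/-- The projection `P_a = |a⟩⟨a|`. -/
def P {m : ℕ} (a : Fin m) : H m →L[ℂ] H m := outer (ket a) (ket a)

/-- The Grover coin `C_G = 2|s⟩⟨s| - 1`. -/
def groverC (m : ℕ) : H m →L[ℂ] H m := (2 : ℂ) • outer (ketS m) (ketS m) - 1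

lemma outer_apply {m : ℕ} (x y v : H m) : outer x y v = (inner ℂ y v : ℂ) • x := rfl

lemma outer_mul {m : ℕ} (x y z w : H m) :
    outer x y * outer z w = (inner ℂ y z : ℂ) • outer x w := by
  ext v
  simp [outer_apply, ContinuousLinearMap.mul_apply, inner_smul_right, smul_smul]
  ring_nf
  simp

lemma inner_ket_ket {m : ℕ} (a b : Fin m) :
    (inner ℂ (ket a) (ket b) : ℂ) = if a = b then 1 else 0 := by
  simp [ket, EuclideanSpace.inner_single_left, EuclideanSpace.single_apply, eq_comm]

lemma inner_ket_ketS {m : ℕ} (hm : 1 ≤ m) (a : Fin m) :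
    (inner ℂ (ket a) (ketS m) : ℂ) = ((Real.sqrt m : ℂ))⁻¹ := by
  simp only [ketS, inner_smul_right, inner_sum, inner_ket_ket]
  simp

lemma inner_ketS_ket {m : ℕ} (hm : 1 ≤ m) (a : Fin m) :
    (inner ℂ (ketS m) (ket a) : ℂ) = ((Real.sqrt m : ℂ))⁻¹ := by
  rw [← inner_conj_symm, inner_ket_ketS hm]
  simp

lemma PA_mul {m : ℕ} (hm : 1 ≤ m) (a : Fin m) :
    P a * groverC m
      = ((2 : ℂ) * ((Real.sqrt m : ℂ))⁻¹) • outer (ket a) (ketS m) - P a := by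
  simp only [P, groverC, mul_sub, mul_smul_comm, mul_one, outer_mul,
    inner_ket_ketS hm, smul_smul]


/-- Lemma 1 of the paper: `(P_a C_G)^n = p_n |a⟩⟨s| + q_n P_a` with
`p_n = (2/√m)(2/m - 1)^(n-1)` and `q_n = -(2/m - 1)^(n-1)`. -/
theorem grover_proj_pow (m : ℕ) (hm : 1 ≤ m) (a : Fin m) (n : ℕ) (hn : 1 ≤ n) :
    (P a * groverC m) ^ n
      = ((2 / Real.sqrt m * (2 / (m : ℝ) - 1) ^ (n - 1) : ℝ) : ℂ) • outer (ket a) (ketS m)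
        + ((-((2 / (m : ℝ) - 1) ^ (n - 1)) : ℝ) : ℂ) • P a := by
  have hm0 : (0:ℝ) < m := by exact_mod_cast hm
  have hs0 : Real.sqrt m ≠ 0 := by positivity
  have hsC : ((Real.sqrt m : ℝ) : ℂ) ≠ 0 := by exact_mod_cast hs0
  have hc2 : ((m : ℕ) : ℂ) = ((Real.sqrt m : ℝ) : ℂ) * ((Real.sqrt m : ℝ) : ℂ) := by
    norm_cast
    exact (Real.mul_self_sqrt hm0.le).symm
  induction n, hn using Nat.le_induction with
  | base =>
    rw [pow_one, PA_mul hm]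
    push_cast
    match_scalars
    · simp
      field_simp
    · simp
  | succ n hn ih =>
    rw [pow_succ, ih, PA_mul hm]
    have he : n + 1 - 1 = (n - 1) + 1 := by omega
    rw [he]
    simp only [mul_sub, add_mul, smul_mul_assoc, mul_smul_comm, smul_mul_assoc,
      outer_mul, inner_ketS_ket hm, inner_ket_ket, if_pos rfl, smul_smul, P]
    match_scalars
    all_goals
      push_cast
      rw [pow_succ]
      generalize ((2 : ℂ) / (m:ℂ) - 1) ^ (n - 1) = t
      rw [hc2]
      field_simp
      ring
end
end

section
/- Let d = 2, m = 4, and take the Grover coin values r = −1/2, t = 1/2. Then for every n ≥ 1 and every x ∈ ℤ², the averaged probability distribution of the quantum walk with random phase shifts satisfies |κ|² · Σ_{a∈(Fin 4)^n, e(a_1)+⋯+e(a_n) = x} |Ξ(a)|² = (1/4^n) · #{ a ∈ (Fin 4)^n : e(a_1)+⋯+e(a_n) = x }, where κ = (r−t)/2 + 2t; i.e. the mean distribution coincides with that of the memoryless classical random walk on ℤ² with equal probability 1/4 for each direction. -/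
noncomputable section

open scoped BigOperators

/-- `Ξ(a_1, …, a_n) = ∏_{j=1}^{n-1} (t + (r - t) δ_{a_j, a_{j+1}})` (empty product is 1). -/
def Xi (m n : ℕ) (r t : ℂ) (a : Fin n → Fin m) : ℂ :=
  ∏ j : Fin n, if h : (j : ℕ) + 1 < n then
    (t + (r - t) * (if a j = a ⟨(j : ℕ) + 1, h⟩ then 1 else 0)) else 1

/-- The `2d` signed standard basis vectors of `ℤ^d`: `e(2k) = u_k`, `e(2k+1) = -u_k`. -/
def eZ (d : ℕ) (a : Fin (2 * d)) : Fin d → ℤ :=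
  Pi.single ⟨(a : ℕ) / 2, by have := a.2; omega⟩ (if (a : ℕ) % 2 = 0 then 1 else -1)

lemma Xi_norm_grover (n : ℕ) (a : Fin n → Fin (2 * 2)) :
    ‖Xi (2 * 2) n (-1 / 2) (1 / 2) a‖ = (1 / 2 : ℝ) ^ (n - 1) := by
  rw [Xi, norm_prod]
  have hfac : ∀ j : Fin n,
      ‖if h : (j : ℕ) + 1 < n then
        ((1 : ℂ)/2 + ((-1 : ℂ)/2 - 1/2) * (if a j = a ⟨(j : ℕ) + 1, h⟩ then 1 else 0))
      else 1‖ = if (j : ℕ) + 1 < n then (1/2 : ℝ) else 1 := by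
    intro j
    by_cases h : (j : ℕ) + 1 < n
    · rw [dif_pos h, if_pos h]
      by_cases he : a j = a ⟨(j : ℕ) + 1, h⟩
      · rw [if_pos he]
        norm_num
      · rw [if_neg he]
        norm_num
    · rw [dif_neg h, if_neg h, norm_one]
  calc (∏ j : Fin n, ‖if h : (j : ℕ) + 1 < n then
        ((1 : ℂ)/2 + ((-1 : ℂ)/2 - 1/2) * (if a j = a ⟨(j : ℕ) + 1, h⟩ then 1 else 0))
      else 1‖)
      = ∏ j : Fin n, (if (j : ℕ) + 1 < n then (1/2 : ℝ) else 1) := by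
        exact Finset.prod_congr rfl fun j _ => hfac j
    _ = ∏ j ∈ Finset.range n, (if j + 1 < n then (1/2 : ℝ) else 1) := by
        rw [Finset.prod_range fun j => if j + 1 < n then (1/2 : ℝ) else 1]
    _ = (1 / 2 : ℝ) ^ (n - 1) := by
        rcases n with _ | k
        · simp
        · rw [Finset.prod_range_succ, if_neg (by omega)]
          simp only [Nat.add_sub_cancel, mul_one]
          rw [Finset.prod_congr rfl (fun j hj => if_pos (by
            simp only [Finset.mem_range] at hj; omega))]
          simp

/-- Eq. (31) of the paper: for `d = 2` with the Grover coin (`r = -1/2`, `t = 1/2`), the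
phase-averaged distribution of the quantum walk with random phase shifts coincides with
the memoryless classical random walk on `ℤ²` taking each of the 4 directions with
probability `1/4`. -/
theorem mean_probability_dim_two_classical (n : ℕ) (hn : 1 ≤ n) (x : Fin 2 → ℤ) :
    ‖(((-1 : ℂ) / 2) - 1 / 2) / 2 + 2 * ((1 : ℂ) / 2)‖ ^ 2 *
        ∑ a ∈ Finset.univ.filter
            (fun a : Fin n → Fin (2 * 2) => (∑ j : Fin n, eZ 2 (a j)) = x),
          ‖Xi (2 * 2) n (-1 / 2) (1 / 2) a‖ ^ 2
      = (1 / 4 ^ n) *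
          (Finset.univ.filter
            (fun a : Fin n → Fin (2 * 2) => (∑ j : Fin n, eZ 2 (a j)) = x)).card := by
  have hκ : ‖(((-1 : ℂ) / 2) - 1 / 2) / 2 + 2 * ((1 : ℂ) / 2)‖ = 1 / 2 := by
    norm_num
  rw [hκ]
  rw [Finset.sum_congr rfl (fun a _ => by rw [Xi_norm_grover n a])]
  rw [Finset.sum_const, nsmul_eq_mul]
  obtain ⟨k, rfl⟩ : ∃ k, n = k + 1 := ⟨n - 1, by omega⟩
  simp only [Nat.add_sub_cancel]
  have h2 : ((1/2:ℝ)^k)^2 = (1/4)^k := by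
    rw [← pow_mul, pow_mul']
    norm_num
  rw [h2, pow_succ]
  simp only [one_div, inv_pow]
  ring
end
end

section
/- Let m ≥ 1 and r, t ∈ ℂ satisfy the unitarity constraints |r|² + (m−1)|t|² = 1 and (m−2)|t|² + conj(r)·t + r·conj(t) = 0. Then for every n ≥ 1, Σ_{a∈(Fin m)^n} |Ξ(a)|² = m, where Ξ(a_1,…,a_n) = ∏_{j=1}^{n−1} (t + (r − t)·δ_{a_j,a_{j+1}}). -/
noncomputable section

open scoped BigOperators ComplexConjugate

/-- Under the unitarity constraints on the generalized Grover coin `G_{r,t}`, the total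
incoherent weight of all `n`-step paths is `Σ_a |Ξ(a)|² = m`. -/
theorem sum_Xi_sq (m : ℕ) (hm : 1 ≤ m) (r t : ℂ)
    (h1 : ‖r‖ ^ 2 + ((m : ℝ) - 1) * ‖t‖ ^ 2 = 1)
    (h2 : ((m : ℂ) - 2) * ((‖t‖ ^ 2 : ℝ) : ℂ) + conj r * t + r * conj t = 0)
    (n : ℕ) (hn : 1 ≤ n) :
    ∑ a : Fin n → Fin m, ‖Xi m n r t a‖ ^ 2 = m := by
  set q : Fin m → Fin m → ℂ := fun x y => t + (r - t) * (if x = y then 1 else 0) with hq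
  have hqval : ∀ x y : Fin m, ‖q x y‖ ^ 2 = if x = y then ‖r‖ ^ 2 else ‖t‖ ^ 2 := by
    intro x y
    by_cases h : x = y <;> simp [hq, h]
  have key : ∀ y : Fin m, ∑ x : Fin m, ‖q x y‖ ^ 2 = 1 := by
    intro y
    rw [Finset.sum_congr rfl (fun x _ => hqval x y),
      ← Finset.add_sum_erase Finset.univ _ (Finset.mem_univ y)]
    have h4 : ∑ x ∈ Finset.univ.erase y, (if x = y then ‖r‖ ^ 2 else ‖t‖ ^ 2)
        = ((m : ℝ) - 1) * ‖t‖ ^ 2 := by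
      rw [Finset.sum_congr rfl (fun x hx => if_neg (Finset.ne_of_mem_erase hx))]
      rw [Finset.sum_const, Finset.card_erase_of_mem (Finset.mem_univ y)]
      simp [Finset.card_univ, nsmul_eq_mul, Nat.cast_pred hm]
    rw [if_pos rfl, h4, h1]
  -- split lemma
  have hsplit : ∀ k : ℕ, ∀ hk : 1 ≤ k, ∀ a : Fin (k + 1) → Fin m,
      Xi m (k + 1) r t a
        = q (a 0) (Fin.tail a ⟨0, hk⟩) * Xi m k r t (Fin.tail a) := by
    intro k hk a
    unfold Xi
    rw [Fin.prod_univ_succ]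
    congr 1
    · have h0 : ((0 : Fin (k + 1)) : ℕ) + 1 < k + 1 := by simp; omega
      rw [dif_pos h0]
      have e : a ⟨((0 : Fin (k + 1)) : ℕ) + 1, h0⟩ = Fin.tail a ⟨0, hk⟩ := rfl
      rw [e]
    · apply Finset.prod_congr rfl
      intro j _
      have hjs : ((Fin.succ j : Fin (k+1)) : ℕ) = (j : ℕ) + 1 := rfl
      by_cases h : (j : ℕ) + 1 < k
      · have h' : ((Fin.succ j : Fin (k+1)) : ℕ) + 1 < k + 1 := by omega
        rw [dif_pos h', dif_pos h]
        have e1 : a (Fin.succ j) = Fin.tail a j := rfl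
        have e2 : a ⟨((Fin.succ j : Fin (k+1)) : ℕ) + 1, h'⟩
            = Fin.tail a ⟨(j : ℕ) + 1, h⟩ := rfl
        rw [e1, e2]
      · have h' : ¬ ((Fin.succ j : Fin (k+1)) : ℕ) + 1 < k + 1 := by omega
        rw [dif_neg h', dif_neg h]
  -- main induction
  induction n, hn using Nat.le_induction with
  | base =>
      have hone : ∀ a : Fin 1 → Fin m, Xi m 1 r t a = 1 := by
        intro a; unfold Xi; simp
      simp only [hone]
      simp [Finset.card_univ]
  | succ k hk ih =>
      have step : ∀ a : Fin (k + 1) → Fin m,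
          ‖Xi m (k + 1) r t a‖ ^ 2
            = ‖q (a 0) (Fin.tail a ⟨0, hk⟩)‖ ^ 2 * ‖Xi m k r t (Fin.tail a)‖ ^ 2 := by
        intro a
        rw [hsplit k hk a, norm_mul, mul_pow]
      calc ∑ a : Fin (k + 1) → Fin m, ‖Xi m (k + 1) r t a‖ ^ 2
          = ∑ p : Fin m × (Fin k → Fin m),
              ‖q p.1 (p.2 ⟨0, hk⟩)‖ ^ 2 * ‖Xi m k r t p.2‖ ^ 2 := by
            rw [← (Fin.consEquiv (fun _ : Fin (k + 1) => Fin m)).sum_comp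
              (fun a => ‖Xi m (k + 1) r t a‖ ^ 2)]
            apply Finset.sum_congr rfl
            intro p _
            rw [step]
            congr 1 <;> simp [Fin.consEquiv, Fin.tail, Fin.cons]
        _ = ∑ b : Fin k → Fin m, (∑ x : Fin m, ‖q x (b ⟨0, hk⟩)‖ ^ 2) * ‖Xi m k r t b‖ ^ 2 := by
            rw [Fintype.sum_prod_type_right]
            apply Finset.sum_congr rfl
            intro b _
            rw [Finset.sum_mul]
        _ = ∑ b : Fin k → Fin m, ‖Xi m k r t b‖ ^ 2 := by
            apply Finset.sum_congr rfl
            intro b _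
            rw [key (b ⟨0, hk⟩), one_mul]
        _ = m := ih
end
end

section
/- Let d ≥ 1, m = 2d, and r, t ∈ ℂ satisfy the unitarity constraints |r|² + (m−1)|t|² = 1 and (m−2)|t|² + conj(r)·t + r·conj(t) = 0. Then the averaged probability distribution of the n-step quantum walk with random phase shifts is normalized: K · Σ_{a∈(Fin m)^n} |Ξ(a)|² = 1 for every n ≥ 1, where K = |(r−t)/√m + √m·t|² and Ξ(a_1,…,a_n) = ∏_{j=1}^{n−1} (t + (r − t)·δ_{a_j,a_{j+1}}). Equivalently, Σ_{x∈ℤ^d} K·Σ_{a∈(Fin m)^n, e(a_1)+⋯+e(a_n)=x} |Ξ(a)|² = 1. -/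
noncomputable section

open scoped BigOperators ComplexConjugate

lemma chain_sum (m : ℕ) (c : Fin m → Fin m → ℝ) (S : ℝ)
    (hcol : ∀ k, ∑ i, c i k = S) (N : ℕ) :
    ∑ a : Fin (N+1) → Fin m, ∏ j : Fin N, c (a j.castSucc) (a j.succ)
      = (m : ℝ) * S ^ N := by
  induction N with
  | zero => simp [Finset.card_univ]
  | succ N ih =>
    rw [← Equiv.sum_comp (Fin.consEquiv fun _ : Fin (N+2) => Fin m)]
    rw [Fintype.sum_prod_type]
    have hterm : ∀ (x : Fin m) (b : Fin (N+1) → Fin m),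
        (∏ j : Fin (N+1), c ((Fin.consEquiv fun _ : Fin (N+2) => Fin m) (x, b) j.castSucc)
          ((Fin.consEquiv fun _ : Fin (N+2) => Fin m) (x, b) j.succ))
        = c x (b 0) * ∏ j : Fin N, c (b j.castSucc) (b j.succ) := by
      intro x b
      have h0 : ((Fin.consEquiv fun _ : Fin (N+2) => Fin m) (x, b)) = Fin.cons x b := rfl
      rw [h0, Fin.prod_univ_succ]
      refine congrArg₂ _ ?_ ?_
      · simp
      · apply Finset.prod_congr rfl
        intro j _
        rw [← Fin.succ_castSucc]
        simp
    simp_rw [hterm]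
    rw [Finset.sum_comm]
    simp_rw [← Finset.sum_mul, hcol]
    rw [← Finset.mul_sum, ih]
    ring

lemma Xi_norm_sq (m N : ℕ) (r t : ℂ) (a : Fin (N+1) → Fin m) :
    ‖Xi m (N+1) r t a‖ ^ 2 =
      ∏ j : Fin N, (if a j.castSucc = a j.succ then ‖r‖ ^ 2 else ‖t‖ ^ 2) := by
  unfold Xi
  rw [norm_prod, ← Finset.prod_pow, Fin.prod_univ_castSucc]
  have hlast : ¬ ((Fin.last N : ℕ) + 1 < N + 1) := by simp
  rw [dif_neg hlast, norm_one, one_pow, mul_one]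
  apply Finset.prod_congr rfl
  intro j _
  have hj : ((j.castSucc : ℕ)) + 1 < N + 1 := by
    have := j.isLt; simp only [Fin.coe_castSucc]; omega
  rw [dif_pos hj]
  have hmk : (⟨(j.castSucc : ℕ) + 1, hj⟩ : Fin (N+1)) = j.succ := rfl
  rw [hmk]
  by_cases h : a j.castSucc = a j.succ
  · simp only [h, if_true, mul_one]
    have hr : t + (r - t) = r := by ring
    rw [hr]
  · simp [h]

/-- Eq. (32) of the paper: the phase-averaged probability distribution of the `n`-step
quantum walk with random phase shifts is normalized:
`K Σ_a |Ξ(a)|² = 1`, equivalently `Σ_{x ∈ ℤ^d} K Σ_{a ≡ x} |Ξ(a)|² = 1`. -/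
theorem mean_probability_normalized (d : ℕ) (hd : 1 ≤ d) (r t : ℂ)
    (h1 : ‖r‖ ^ 2 + (((2 * d : ℕ) : ℝ) - 1) * ‖t‖ ^ 2 = 1)
    (h2 : (((2 * d : ℕ) : ℂ) - 2) * ((‖t‖ ^ 2 : ℝ) : ℂ) + conj r * t + r * conj t = 0)
    (n : ℕ) (hn : 1 ≤ n) :
    ‖(r - t) / (Real.sqrt (2 * d) : ℂ) + (Real.sqrt (2 * d) : ℂ) * t‖ ^ 2 *
        ∑ a : Fin n → Fin (2 * d), ‖Xi (2 * d) n r t a‖ ^ 2 = 1 ∧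
      ∑' x : Fin d → ℤ,
        (‖(r - t) / (Real.sqrt (2 * d) : ℂ) + (Real.sqrt (2 * d) : ℂ) * t‖ ^ 2 *
          ∑ a ∈ Finset.univ.filter
              (fun a : Fin n → Fin (2 * d) => (∑ j : Fin n, eZ d (a j)) = x),
            ‖Xi (2 * d) n r t a‖ ^ 2) = 1 := by
  classical
  obtain ⟨N, rfl⟩ : ∃ N, n = N + 1 := ⟨n - 1, by omega⟩
  have hd0 : (0:ℝ) < 2 * (d:ℝ) := by
    have h : (1:ℝ) ≤ (d:ℝ) := by exact_mod_cast hd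
    linarith
  have hcol : ∀ k : Fin (2*d),
      ∑ i : Fin (2*d), (if i = k then ‖r‖ ^ 2 else ‖t‖ ^ 2) = 1 := by
    intro k
    have hsplit : ∀ i : Fin (2*d),
        (if i = k then ‖r‖ ^ 2 else ‖t‖ ^ 2)
          = ‖t‖ ^ 2 + (if i = k then ‖r‖ ^ 2 - ‖t‖ ^ 2 else 0) := by
      intro i; by_cases h : i = k <;> simp [h]
    rw [Finset.sum_congr rfl fun i _ => hsplit i, Finset.sum_add_distrib,
      Finset.sum_const, Finset.sum_ite_eq']
    simp only [Finset.mem_univ, if_true, Finset.card_univ, Fintype.card_fin, nsmul_eq_mul]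
    push_cast at h1 ⊢
    linarith [h1]
  have hsum : ∑ a : Fin (N+1) → Fin (2*d), ‖Xi (2*d) (N+1) r t a‖ ^ 2 = ((2*d : ℕ) : ℝ) := by
    calc ∑ a : Fin (N+1) → Fin (2*d), ‖Xi (2*d) (N+1) r t a‖ ^ 2
        = ∑ a : Fin (N+1) → Fin (2*d), ∏ j : Fin N,
            (if a j.castSucc = a j.succ then ‖r‖ ^ 2 else ‖t‖ ^ 2) :=
          Finset.sum_congr rfl fun a _ => Xi_norm_sq _ _ _ _ _
      _ = ((2*d : ℕ) : ℝ) * 1 ^ N :=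
          chain_sum (2*d) (fun i k => if i = k then ‖r‖ ^ 2 else ‖t‖ ^ 2) 1 hcol N
      _ = ((2*d : ℕ) : ℝ) := by ring
  set sq : ℝ := Real.sqrt (2 * (d:ℝ)) with hsqdef
  set z : ℂ := (r - t) / (sq:ℂ) + (sq:ℂ) * t with hzdef
  have hsq : sq ^ 2 = 2 * (d:ℝ) := Real.sq_sqrt hd0.le
  have hsq0 : sq ≠ 0 := ne_of_gt (Real.sqrt_pos.mpr hd0)
  have hsqC0 : (sq : ℂ) ≠ 0 := by exact_mod_cast hsq0
  have hsqC : ((sq:ℂ)) ^ 2 = 2 * (d:ℂ) := by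
    have h := congrArg (fun x : ℝ => (x:ℂ)) hsq
    push_cast at h
    exact h
  have h1C : r * conj r + (2 * (d:ℂ) - 1) * (t * conj t) = 1 := by
    have h := congrArg (fun x : ℝ => (x:ℂ)) h1
    push_cast at h
    rw [← Complex.mul_conj' r, ← Complex.mul_conj' t] at h
    linear_combination h
  have h2C : (2 * (d:ℂ) - 2) * (t * conj t) + conj r * t + r * conj t = 0 := by
    push_cast at h2
    rw [← Complex.mul_conj' t] at h2
    linear_combination h2
  have hz : z * (sq:ℂ) = r + (2*(d:ℂ) - 1) * t := by
    rw [hzdef]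
    field_simp
    linear_combination t * hsqC
  have hzc : conj z * (sq:ℂ) = conj r + (2*(d:ℂ) - 1) * conj t := by
    calc conj z * (sq:ℂ) = conj (z * (sq:ℂ)) := by rw [map_mul, Complex.conj_ofReal]
      _ = conj (r + (2*(d:ℂ)-1)*t) := by rw [hz]
      _ = conj r + (2*(d:ℂ)-1)*conj t := by
          simp [map_add, map_mul, map_sub, map_one, map_ofNat]
  have hKC : ((‖z‖ : ℝ):ℂ)^2 * (2*(d:ℂ)) = 1 := by
    rw [← Complex.mul_conj' z, ← hsqC]
    calc z * conj z * (sq:ℂ)^2 = (z * (sq:ℂ)) * (conj z * (sq:ℂ)) := by ring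
      _ = (r + (2*(d:ℂ)-1)*t) * (conj r + (2*(d:ℂ)-1)*conj t) := by rw [hz, hzc]
      _ = 1 := by linear_combination h1C + (2*(d:ℂ)-1) * h2C
  have hK : ‖z‖^2 * ((2*d : ℕ) : ℝ) = 1 := by
    have h' : ((‖z‖^2 * ((2*d:ℕ):ℝ) : ℝ) : ℂ) = ((1:ℝ):ℂ) := by
      push_cast
      linear_combination hKC
    exact_mod_cast h'
  have hfirst : ‖z‖ ^ 2 * ∑ a : Fin (N+1) → Fin (2*d), ‖Xi (2*d) (N+1) r t a‖ ^ 2 = 1 := by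
    rw [hsum]; exact hK
  refine ⟨hfirst, ?_⟩
  set g : (Fin (N+1) → Fin (2*d)) → (Fin d → ℤ) := fun a => ∑ j, eZ d (a j) with hg
  have hvanish : ∀ x ∉ Finset.image g Finset.univ,
      (‖z‖ ^ 2 *
        ∑ a ∈ Finset.univ.filter
            (fun a : Fin (N+1) → Fin (2*d) => (∑ j : Fin (N+1), eZ d (a j)) = x),
          ‖Xi (2*d) (N+1) r t a‖ ^ 2) = 0 := by
    intro x hx
    have hempty : Finset.univ.filter
        (fun a : Fin (N+1) → Fin (2*d) => (∑ j : Fin (N+1), eZ d (a j)) = x) = ∅ := by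
      rw [Finset.filter_eq_empty_iff]
      intro a _ ha
      apply hx
      rw [Finset.mem_image]
      exact ⟨a, Finset.mem_univ a, ha⟩
    rw [hempty, Finset.sum_empty, mul_zero]
  rw [tsum_eq_sum hvanish, ← Finset.mul_sum,
    Finset.sum_fiberwise_of_maps_to (fun a _ => Finset.mem_image_of_mem g (Finset.mem_univ a))]
  exact hfirst
end
end

section
/- Let d ≥ 1, m = 2d, and r, t ∈ ℂ satisfy the unitarity constraints |r|² + (m−1)|t|² = 1 and (m−2)|t|² + conj(r)·t + r·conj(t) = 0, together with |r| = |t|. Then either m = 2, |r| = 1/√2 and Re(conj(r)·t) = 0 (i.e. the phases of r and t differ by π/2 mod π), or m = 4, |r| = 1/2 and t = −r. -/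
noncomputable section

open scoped ComplexConjugate

/-- Only in dimensions `d = 1` (`m = 2`) and `d = 2` (`m = 4`) can a unitary generalized
Grover coin `G_{r,t}` satisfy `|r| = |t|`: then either `m = 2`, `|r| = 1/√2` and the
phases of `r` and `t` differ by `π/2 (mod π)` (i.e. `Re(r̄ t) = 0`), or `m = 4`,
`|r| = 1/2` and `t = -r`. -/
theorem grover_balanced_classification (d : ℕ) (hd : 1 ≤ d) (m : ℕ) (hm : m = 2 * d)
    (r t : ℂ)
    (h1 : ‖r‖ ^ 2 + ((m : ℝ) - 1) * ‖t‖ ^ 2 = 1)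
    (h2 : ((m : ℂ) - 2) * ((‖t‖ ^ 2 : ℝ) : ℂ) + conj r * t + r * conj t = 0)
    (hrt : ‖r‖ = ‖t‖) :
    (m = 2 ∧ ‖r‖ = 1 / Real.sqrt 2 ∧ (conj r * t).re = 0) ∨
      (m = 4 ∧ ‖r‖ = 1 / 2 ∧ t = -r) := by
  -- From |r| = |t|, h1 gives m * ‖t‖² = 1
  rw [hrt] at h1
  have hmt : (m : ℝ) * ‖t‖ ^ 2 = 1 := by ring_nf; ring_nf at h1; linarith
  -- real part of h2
  have hre : ((m : ℝ) - 2) * ‖t‖ ^ 2 + 2 * (conj r * t).re = 0 := by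
    have h := congrArg Complex.re h2
    simp only [Complex.add_re, Complex.mul_re, Complex.sub_re, Complex.ofReal_re,
      Complex.ofReal_im, Complex.natCast_re, Complex.natCast_im, Complex.conj_re,
      Complex.conj_im, Complex.zero_re, Complex.re_ofNat, Complex.im_ofNat] at h
    simp only [Complex.mul_re, Complex.conj_re, Complex.conj_im]
    ring_nf at h ⊢
    linarith
  -- bound on the real part
  have hnorm : ‖conj r * t‖ = ‖t‖ ^ 2 := by
    rw [norm_mul, RCLike.norm_conj, hrt]; ring
  have habs : |(conj r * t).re| ≤ ‖t‖ ^ 2 := by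
    rw [← hnorm]; exact Complex.abs_re_le_norm _
  have htpos : 0 < ‖t‖ ^ 2 := by
    by_contra h
    push_neg at h
    nlinarith [Nat.one_le_cast (α := ℝ) |>.mpr (by omega : 1 ≤ m)]
  -- m ≤ 4
  have hm4 : m ≤ 4 := by
    by_contra h
    push_neg at h
    have : (5 : ℝ) ≤ (m : ℝ) := by exact_mod_cast h
    have := abs_le.mp habs
    nlinarith
  have hd2 : d ≤ 2 := by omega
  interval_cases d
  · -- m = 2
    left
    subst hm
    refine ⟨rfl, ?_, ?_⟩
    · rw [hrt]
      have : ‖t‖ ^ 2 = 1 / 2 := by push_cast at hmt; linarith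
      have h2' : ‖t‖ = Real.sqrt (1/2) := by
        rw [← this, Real.sqrt_sq (norm_nonneg t)]
      rw [h2', one_div, one_div, Real.sqrt_inv]
    · push_cast at hre; linarith
  · -- m = 4
    right
    subst hm
    have ht2 : ‖t‖ ^ 2 = 1 / 4 := by push_cast at hmt; linarith
    have hreval : (conj r * t).re = -(1/4) := by push_cast at hre; linarith [ht2]
    have hnormval : ‖conj r * t‖ = 1/4 := by rw [hnorm, ht2]
    have him : (conj r * t).im = 0 := by
      have h' : Complex.normSq (conj r * t) = (1/4) ^ 2 := by
        rw [Complex.normSq_eq_norm_sq, hnormval]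
      rw [Complex.normSq_apply] at h'
      have him2 : (conj r * t).im * (conj r * t).im = 0 := by nlinarith
      exact mul_self_eq_zero.mp him2
    have hz : conj r * t = -(1/4 : ℂ) := by
      apply Complex.ext <;> simp [hreval, him]
    have hrr : conj r * r = (1/4 : ℂ) := by
      have : conj r * r = ((‖r‖ ^ 2 : ℝ) : ℂ) := by
        rw [mul_comm, Complex.mul_conj, Complex.normSq_eq_norm_sq]
      rw [this, hrt, ht2]; norm_num
    have hr0 : r ≠ 0 := by
      intro h; rw [h] at hrr; simp at hrr
    refine ⟨rfl, ?_, ?_⟩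
    · rw [hrt]
      have : ‖t‖ = 1/2 := by nlinarith [norm_nonneg t]
      exact this
    · have : conj r * (t + r) = 0 := by rw [mul_add, hz, hrr]; ring
      have hcr : conj r ≠ 0 := by simpa using hr0
      have := (mul_eq_zero.mp this).resolve_left hcr
      exact eq_neg_of_add_eq_zero_left this
end
end
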